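/- arXiv:1309.6144 — 3 statements merged into one kernel-verified Lean document; each statement's English description precedes it below -/
import Mathlib

section
/- Let G be a nonempty finite simple graph, G₀ and G₁ disjoint copies of G, and G' the graph obtained from their disjoint union by adding vertices u,v with u adjacent to all of G₀, v adjacent to all of G₁, and u adjacent to v. Then i(G') = i(G) + 1. -/
open SimpleGraph

variable {V : Type*}

/-- A set of vertices is independent if no two of its elements are adjacent. -/
def SimpleGraph.IsIndepSet' (G : SimpleGraph V) (s : Set V) : Prop :=
  s.Pairwise fun a b => ¬ G.Adj a b

/-- A set of vertices is a vertex cover if it meets every edge. -/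
def SimpleGraph.IsVertexCover' (G : SimpleGraph V) (s : Set V) : Prop :=
  ∀ ⦃u v : V⦄, G.Adj u v → u ∈ s ∨ v ∈ s

/-- A set of vertices is dominating if every vertex is in it or adjacent to one of its members. -/
def SimpleGraph.IsDomSet (G : SimpleGraph V) (D : Set V) : Prop :=
  ∀ v : V, v ∈ D ∨ ∃ u ∈ D, G.Adj u v

/-- A feedback vertex set: removing it leaves an acyclic graph. -/
def SimpleGraph.IsFVS (G : SimpleGraph V) (F : Set V) : Prop :=
  (G.induce (Fᶜ : Set V)).IsAcyclic

/-- α(G): the maximum size of an independent set. -/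
noncomputable def SimpleGraph.indepNum' (G : SimpleGraph V) : ℕ :=
  sSup {n | ∃ s : Set V, G.IsIndepSet' s ∧ s.ncard = n}

/-- τ(G): the minimum size of a vertex cover. -/
noncomputable def SimpleGraph.vcNum (G : SimpleGraph V) : ℕ :=
  sInf {n | ∃ s : Set V, G.IsVertexCover' s ∧ s.ncard = n}

/-- ω(G): the maximum size of a clique. -/
noncomputable def SimpleGraph.omegaNum (G : SimpleGraph V) : ℕ :=
  sSup {n | ∃ s : Set V, G.IsClique s ∧ s.ncard = n}

/-- γ(G): the minimum size of a dominating set. -/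
noncomputable def SimpleGraph.domNum (G : SimpleGraph V) : ℕ :=
  sInf {n | ∃ D : Set V, G.IsDomSet D ∧ D.ncard = n}

/-- i(G): the minimum size of an independent dominating set. -/
noncomputable def SimpleGraph.indepDomNum (G : SimpleGraph V) : ℕ :=
  sInf {n | ∃ D : Set V, G.IsIndepSet' D ∧ G.IsDomSet D ∧ D.ncard = n}

/-- ν(G): the minimum size of a feedback vertex set. -/
noncomputable def SimpleGraph.fvsNum (G : SimpleGraph V) : ℕ :=
  sInf {n | ∃ F : Set V, G.IsFVS F ∧ F.ncard = n}

/-- The graph G' of the paper: two disjoint copies of G plus u (= inr false) dominating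
copy 0, v (= inr true) dominating copy 1, and the edge uv. -/
def SimpleGraph.twoCopiesExt (G : SimpleGraph V) : SimpleGraph ((V ⊕ V) ⊕ Bool) :=
  SimpleGraph.fromRel (fun x y =>
    (∃ a b, x = .inl (.inl a) ∧ y = .inl (.inl b) ∧ G.Adj a b) ∨
    (∃ a b, x = .inl (.inr a) ∧ y = .inl (.inr b) ∧ G.Adj a b) ∨
    (∃ a, x = .inr false ∧ y = .inl (.inl a)) ∨
    (∃ a, x = .inr true ∧ y = .inl (.inr a)) ∨
    (x = .inr false ∧ y = .inr true))
private lemma tce_adj00 (G : SimpleGraph V) (a b : V) :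
    G.twoCopiesExt.Adj (.inl (.inl a)) (.inl (.inl b)) ↔ G.Adj a b := by
  simp [twoCopiesExt, fromRel_adj]
  constructor
  · rintro ⟨h, h2 | h2⟩ <;> [exact h2; exact h2.symm]
  · intro h; exact ⟨h.ne, Or.inl h⟩

private lemma tce_adj11 (G : SimpleGraph V) (a b : V) :
    G.twoCopiesExt.Adj (.inl (.inr a)) (.inl (.inr b)) ↔ G.Adj a b := by
  simp [twoCopiesExt, fromRel_adj]
  constructor
  · rintro ⟨h, h2 | h2⟩ <;> [exact h2; exact h2.symm]
  · intro h; exact ⟨h.ne, Or.inl h⟩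

private lemma tce_nadj01 (G : SimpleGraph V) (a b : V) :
    ¬ G.twoCopiesExt.Adj (.inl (.inl a)) (.inl (.inr b)) := by
  simp [twoCopiesExt, fromRel_adj]

private lemma tce_adj_u0 (G : SimpleGraph V) (a : V) :
    G.twoCopiesExt.Adj (.inr false) (.inl (.inl a)) := by
  simp [twoCopiesExt, fromRel_adj]

private lemma tce_nadj_u1 (G : SimpleGraph V) (a : V) :
    ¬ G.twoCopiesExt.Adj (.inr false) (.inl (.inr a)) := by
  simp [twoCopiesExt, fromRel_adj]

private lemma tce_adj_v1 (G : SimpleGraph V) (a : V) :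
    G.twoCopiesExt.Adj (.inr true) (.inl (.inr a)) := by
  simp [twoCopiesExt, fromRel_adj]

private lemma tce_nadj_v0 (G : SimpleGraph V) (a : V) :
    ¬ G.twoCopiesExt.Adj (.inr true) (.inl (.inl a)) := by
  simp [twoCopiesExt, fromRel_adj]

private lemma tce_adj_uv (G : SimpleGraph V) :
    G.twoCopiesExt.Adj (.inr false) (.inr true) := by
  simp [twoCopiesExt, fromRel_adj]

/-- Every finite graph has an independent dominating set (a maximum independent set). -/
private lemma exists_indep_dom [Fintype V] (G : SimpleGraph V) :
    ∃ D : Set V, G.IsIndepSet' D ∧ G.IsDomSet D := by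
  classical
  obtain ⟨s, hs, hmax⟩ := Finset.exists_max_image
      ((Finset.univ : Finset (Finset V)).filter
        (fun s => ∀ a ∈ s, ∀ b ∈ s, a ≠ b → ¬ G.Adj a b))
      Finset.card ⟨∅, by simp⟩
  simp only [Finset.mem_filter, Finset.mem_univ, true_and] at hs
  refine ⟨(s : Set V), fun a ha b hb hne => hs a ha b hb hne, ?_⟩
  intro v
  by_contra hc
  push_neg at hc
  obtain ⟨hv, hnb⟩ := hc
  have hvs : v ∉ s := by simpa using hv
  have hins : (insert v s) ∈ ((Finset.univ : Finset (Finset V)).filter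
      (fun s => ∀ a ∈ s, ∀ b ∈ s, a ≠ b → ¬ G.Adj a b)) := by
    simp only [Finset.mem_filter, Finset.mem_univ, true_and]
    intro a ha b hb hne
    rcases Finset.mem_insert.1 ha with ha' | ha'
    · rcases Finset.mem_insert.1 hb with hb' | hb'
      · exact absurd (ha'.trans hb'.symm) hne
      · subst ha'; intro hadj; exact hnb b (Finset.mem_coe.2 hb') hadj.symm
    · rcases Finset.mem_insert.1 hb with hb' | hb'
      · subst hb'; intro hadj; exact hnb a (Finset.mem_coe.2 ha') hadj
      · exact hs a ha' b hb' hne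
  have := hmax _ hins
  rw [Finset.card_insert_of_notMem hvs] at this
  omega

/-- i(G') = i(G) + 1 for the two-copies construction. -/
theorem indepDomNum_twoCopiesExt [Fintype V] [Nonempty V] (G : SimpleGraph V) :
    G.twoCopiesExt.indepDomNum = G.indepDomNum + 1 := by
  classical
  obtain ⟨D₀, hD₀i, hD₀d, hD₀card⟩ :
      ∃ D : Set V, G.IsIndepSet' D ∧ G.IsDomSet D ∧ D.ncard = G.indepDomNum := by
    obtain ⟨D, h1, h2⟩ := exists_indep_dom G
    obtain ⟨D', h1', h2', h3'⟩ := Nat.sInf_mem (⟨D.ncard, D, h1, h2, rfl⟩ :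
      {n | ∃ D : Set V, G.IsIndepSet' D ∧ G.IsDomSet D ∧ D.ncard = n}.Nonempty)
    exact ⟨D', h1', h2', h3'⟩
  have hf0inj : Function.Injective (fun a : V => (.inl (.inl a) : (V ⊕ V) ⊕ Bool)) :=
    fun a b h => by simpa using h
  have hf1inj : Function.Injective (fun a : V => (.inl (.inr a) : (V ⊕ V) ⊕ Bool)) :=
    fun a b h => by simpa using h
  have hE : ∃ E : Set ((V ⊕ V) ⊕ Bool), G.twoCopiesExt.IsIndepSet' E ∧
      G.twoCopiesExt.IsDomSet E ∧ E.ncard = G.indepDomNum + 1 := by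
    refine ⟨(fun a => (.inl (.inl a) : (V ⊕ V) ⊕ Bool)) '' D₀ ∪ {.inr true}, ?_, ?_, ?_⟩
    · rintro x (⟨a, ha, rfl⟩ | hx) y (⟨b, hb, rfl⟩ | hy) hne hadj
      · exact hD₀i ha hb (fun h => hne (by rw [h])) ((tce_adj00 G a b).1 hadj)
      · rw [Set.mem_singleton_iff.1 hy] at hadj
        exact (tce_nadj_v0 G a) hadj.symm
      · rw [Set.mem_singleton_iff.1 hx] at hadj
        exact (tce_nadj_v0 G b) hadj
      · exact hne (by rw [Set.mem_singleton_iff.1 hx, Set.mem_singleton_iff.1 hy])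
    · rintro (⟨c | c⟩ | b)
      · rcases hD₀d c with hc | ⟨a, ha, hadj⟩
        · exact Or.inl (Or.inl ⟨c, hc, rfl⟩)
        · exact Or.inr ⟨_, Or.inl ⟨a, ha, rfl⟩, (tce_adj00 G a c).2 hadj⟩
      · exact Or.inr ⟨.inr true, Or.inr rfl, tce_adj_v1 G c⟩
      · cases b
        · exact Or.inr ⟨.inr true, Or.inr rfl, (tce_adj_uv G).symm⟩
        · exact Or.inl (Or.inr rfl)
    · rw [Set.ncard_union_eq (by simp [Set.disjoint_left]) (Set.toFinite _) (Set.toFinite _),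
        Set.ncard_image_of_injective _ hf0inj, Set.ncard_singleton, hD₀card]
  obtain ⟨E, hEi, hEd, hEc⟩ := hE
  refine le_antisymm (Nat.sInf_le ⟨E, hEi, hEd, hEc⟩) ?_
  refine le_csInf ⟨_, E, hEi, hEd, hEc⟩ ?_
  rintro n ⟨D', hD'i, hD'd, rfl⟩
  set S0 : Set V := {a | (.inl (.inl a) : (V ⊕ V) ⊕ Bool) ∈ D'} with hS0def
  set S1 : Set V := {a | (.inl (.inr a) : (V ⊕ V) ⊕ Bool) ∈ D'} with hS1def
  have hS0i : G.IsIndepSet' S0 := fun a ha b hb hne hadj =>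
    hD'i ha hb (fun h => hne (hf0inj h)) ((tce_adj00 G a b).2 hadj)
  have hS1i : G.IsIndepSet' S1 := fun a ha b hb hne hadj =>
    hD'i ha hb (fun h => hne (hf1inj h)) ((tce_adj11 G a b).2 hadj)
  have hdom0 : (.inr false : (V ⊕ V) ⊕ Bool) ∉ D' → G.IsDomSet S0 := by
    intro hu c
    rcases hD'd (.inl (.inl c)) with hc | ⟨w, hw, hadj⟩
    · exact Or.inl hc
    · rcases w with (a | a) | b
      · exact Or.inr ⟨a, hw, (tce_adj00 G a c).1 hadj⟩
      · exact absurd hadj.symm (tce_nadj01 G c a)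
      · cases b
        · exact absurd hw hu
        · exact absurd hadj (tce_nadj_v0 G c)
  have hdom1 : (.inr true : (V ⊕ V) ⊕ Bool) ∉ D' → G.IsDomSet S1 := by
    intro hv c
    rcases hD'd (.inl (.inr c)) with hc | ⟨w, hw, hadj⟩
    · exact Or.inl hc
    · rcases w with (a | a) | b
      · exact absurd hadj (tce_nadj01 G a c)
      · exact Or.inr ⟨a, hw, (tce_adj11 G a c).1 hadj⟩
      · cases b
        · exact absurd hadj (tce_nadj_u1 G c)
        · exact absurd hw hv
  by_cases hu : (.inr false : (V ⊕ V) ⊕ Bool) ∈ D'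
  · have hv : (.inr true : (V ⊕ V) ⊕ Bool) ∉ D' := fun hv =>
      hD'i hu hv (by simp) (tce_adj_uv G)
    have h1 : G.indepDomNum ≤ S1.ncard := Nat.sInf_le ⟨S1, hS1i, hdom1 hv, rfl⟩
    have hsub : (fun a => (.inl (.inr a) : (V ⊕ V) ⊕ Bool)) '' S1 ∪ {.inr false} ⊆ D' := by
      rintro x (⟨a, ha, rfl⟩ | hx)
      · exact ha
      · rw [Set.mem_singleton_iff.1 hx]; exact hu
    have hc := Set.ncard_le_ncard hsub (Set.toFinite _)
    rw [Set.ncard_union_eq (by simp [Set.disjoint_left]) (Set.toFinite _) (Set.toFinite _),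
      Set.ncard_image_of_injective _ hf1inj, Set.ncard_singleton] at hc
    omega
  · by_cases hv : (.inr true : (V ⊕ V) ⊕ Bool) ∈ D'
    · have h0 : G.indepDomNum ≤ S0.ncard := Nat.sInf_le ⟨S0, hS0i, hdom0 hu, rfl⟩
      have hsub : (fun a => (.inl (.inl a) : (V ⊕ V) ⊕ Bool)) '' S0 ∪ {.inr true} ⊆ D' := by
        rintro x (⟨a, ha, rfl⟩ | hx)
        · exact ha
        · rw [Set.mem_singleton_iff.1 hx]; exact hv
      have hc := Set.ncard_le_ncard hsub (Set.toFinite _)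
      rw [Set.ncard_union_eq (by simp [Set.disjoint_left]) (Set.toFinite _) (Set.toFinite _),
        Set.ncard_image_of_injective _ hf0inj, Set.ncard_singleton] at hc
      omega
    · have h0 : G.indepDomNum ≤ S0.ncard := Nat.sInf_le ⟨S0, hS0i, hdom0 hu, rfl⟩
      have hS1ne : S1.Nonempty := by
        rcases hD'd (.inr true) with h | ⟨w, hw, hadj⟩
        · exact absurd h hv
        · rcases w with (a | a) | b
          · exact absurd hadj.symm (tce_nadj_v0 G a)
          · exact ⟨a, hw⟩
          · cases b
            · exact absurd hw hu
            · exact absurd hadj (G.twoCopiesExt.loopless.irrefl _)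
      have h1 : 0 < S1.ncard := (Set.ncard_pos (Set.toFinite _)).2 hS1ne
      have hsub : (fun a => (.inl (.inl a) : (V ⊕ V) ⊕ Bool)) '' S0 ∪
          (fun a => (.inl (.inr a) : (V ⊕ V) ⊕ Bool)) '' S1 ⊆ D' := by
        rintro x (⟨a, ha, rfl⟩ | ⟨a, ha, rfl⟩)
        · exact ha
        · exact ha
      have hc := Set.ncard_le_ncard hsub (Set.toFinite _)
      rw [Set.ncard_union_eq (by simp [Set.disjoint_left]) (Set.toFinite _) (Set.toFinite _),
        Set.ncard_image_of_injective _ hf0inj, Set.ncard_image_of_injective _ hf1inj] at hc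
      omega
end

section
/- Let G = (V,E) be a finite simple graph and V' ⊆ V. Let G_{V'} be obtained from G by adding an independent set V'' of new vertices with |V''| = |V'| and a perfect matching between V' and V''. Then γ(G_{V'}) = γ(G) if and only if G has a minimum dominating set containing every vertex of V'. Moreover γ(G_{V'}) ≥ γ(G) always holds. -/
open SimpleGraph

variable {V : Type*}

/-- G_{V'}: add a pendant independent copy V'' of V', matched to V' by a perfect matching. -/
def SimpleGraph.pendantExt (G : SimpleGraph V) (V' : Set V) : SimpleGraph (V ⊕ ↥V') :=
  SimpleGraph.fromRel (fun x y =>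
    (∃ a b, x = .inl a ∧ y = .inl b ∧ G.Adj a b) ∨
    (∃ a : V', x = .inl (a : V) ∧ y = .inr a))



section Helpers

lemma pe_adj_ll {G : SimpleGraph V} {V' : Set V} {u v : V} :
    (G.pendantExt V').Adj (.inl u) (.inl v) ↔ G.Adj u v := by
  simp only [pendantExt, fromRel_adj]
  constructor
  · rintro ⟨hne, h | h⟩ <;>
      rcases h with ⟨a, b, ha, hb, hab⟩ | ⟨a, ha, hb⟩ <;> simp_all
    · exact hab.symm
  · intro h
    exact ⟨by simp [h.ne], Or.inl (Or.inl ⟨u, v, rfl, rfl, h⟩)⟩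

lemma pe_adj_lr {G : SimpleGraph V} {V' : Set V} {u : V} {b : V'} :
    (G.pendantExt V').Adj (.inl u) (.inr b) ↔ u = (b : V) := by
  simp only [pendantExt, fromRel_adj]
  constructor
  · rintro ⟨hne, h | h⟩ <;>
      rcases h with ⟨a, c, ha, hc, hab⟩ | ⟨a, ha, hc⟩ <;> simp_all
  · rintro rfl
    exact ⟨by simp, Or.inl (Or.inr ⟨b, rfl, rfl⟩)⟩

lemma pe_adj_rl {G : SimpleGraph V} {V' : Set V} {b : V'} {u : V} :
    (G.pendantExt V').Adj (.inr b) (.inl u) ↔ (b : V) = u := by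
  rw [adj_comm, pe_adj_lr, eq_comm]

lemma pe_adj_rr {G : SimpleGraph V} {V' : Set V} {a b : V'} :
    ¬ (G.pendantExt V').Adj (.inr a) (.inr b) := by
  simp only [pendantExt, fromRel_adj]
  rintro ⟨hne, h | h⟩ <;>
    rcases h with ⟨x, y, hx, hy, hxy⟩ | ⟨x, hx, hy⟩ <;> simp_all

lemma domNum_le' {W : Type*} [Finite W] (G : SimpleGraph W) {D : Set W} (h : G.IsDomSet D) :
    G.domNum ≤ D.ncard := Nat.sInf_le ⟨D, h, rfl⟩

lemma exists_min_domSet {W : Type*} [Finite W] (G : SimpleGraph W) :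
    ∃ D : Set W, G.IsDomSet D ∧ D.ncard = G.domNum := by
  have hne : {n | ∃ D : Set W, G.IsDomSet D ∧ D.ncard = n}.Nonempty :=
    ⟨Set.univ.ncard, Set.univ, fun v => Or.inl trivial, rfl⟩
  obtain ⟨D, hD, hc⟩ := Nat.sInf_mem hne
  exact ⟨D, hD, hc⟩

/-- Projecting a dominating set of the pendant extension back to `V`. -/
lemma pe_project {G : SimpleGraph V} {V' : Set V} [Finite V] {D' : Set (V ⊕ ↥V')}
    (hD' : (G.pendantExt V').IsDomSet D') :
    ∃ D : Set V, G.IsDomSet D ∧ D.ncard ≤ D'.ncard ∧ V' ⊆ D := by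
  refine ⟨Sum.elim id Subtype.val '' D', ?_, Set.ncard_image_le (Set.toFinite _), ?_⟩
  · intro v
    rcases hD' (.inl v) with h | ⟨u, hu, hadj⟩
    · exact Or.inl ⟨_, h, rfl⟩
    · cases u with
      | inl w => exact Or.inr ⟨w, ⟨_, hu, rfl⟩, pe_adj_ll.mp hadj⟩
      | inr b => exact Or.inl ⟨_, hu, pe_adj_rl.mp hadj⟩
  · intro v hv
    rcases hD' (.inr ⟨v, hv⟩) with h | ⟨u, hu, hadj⟩
    · exact ⟨_, h, rfl⟩
    · cases u with
      | inl w => exact ⟨_, hu, pe_adj_lr.mp hadj⟩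
      | inr b => exact absurd hadj pe_adj_rr

end Helpers

/-- γ(G_{V'}) ≥ γ(G), and γ(G_{V'}) = γ(G) iff G has a minimum
dominating set containing every vertex of V'. -/
theorem domNum_pendantExt [Fintype V] (G : SimpleGraph V) (V' : Set V) :
    G.domNum ≤ (G.pendantExt V').domNum ∧
      ((G.pendantExt V').domNum = G.domNum ↔
        ∃ D : Set V, G.IsDomSet D ∧ D.ncard = G.domNum ∧ V' ⊆ D) := by
  have hle : G.domNum ≤ (G.pendantExt V').domNum := by
    obtain ⟨D', hD', hc⟩ := exists_min_domSet (G.pendantExt V')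
    obtain ⟨D, hD, hcard, -⟩ := pe_project hD'
    calc G.domNum ≤ D.ncard := domNum_le' G hD
      _ ≤ D'.ncard := hcard
      _ = _ := hc
  refine ⟨hle, ?_, ?_⟩
  · intro heq
    obtain ⟨D', hD', hc⟩ := exists_min_domSet (G.pendantExt V')
    obtain ⟨D, hD, hcard, hsub⟩ := pe_project hD'
    have h1 : G.domNum ≤ D.ncard := domNum_le' G hD
    have h2 : D.ncard ≤ G.domNum := by omega
    exact ⟨D, hD, le_antisymm h2 h1, hsub⟩
  · rintro ⟨D, hD, hc, hsub⟩
    have hdom' : (G.pendantExt V').IsDomSet (Sum.inl '' D) := by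
      intro x
      cases x with
      | inl v =>
        rcases hD v with h | ⟨u, hu, hadj⟩
        · exact Or.inl ⟨v, h, rfl⟩
        · exact Or.inr ⟨.inl u, ⟨u, hu, rfl⟩, pe_adj_ll.mpr hadj⟩
      | inr b =>
        exact Or.inr ⟨.inl b, ⟨(b : V), hsub b.2, rfl⟩, pe_adj_lr.mpr rfl⟩
    have h3 : (G.pendantExt V').domNum ≤ D.ncard := by
      have := domNum_le' _ hdom'
      rwa [Set.ncard_image_of_injective _ Sum.inl_injective] at this
    omega
end

section
/- Let G be a finite simple graph, k ≥ i(G), and let G_k be the graph on V(G) × {1,…,k} where each layer V × {i} induces a clique and (u,i) ~ (v,j) for i ≠ j iff v ∈ N_G[u]. Then i(G_k) = i(G). -/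
open SimpleGraph

variable {V : Type*}

/-- G_k of the paper: k layers each inducing a clique, with (u,i) ~ (v,j) for i ≠ j
iff v ∈ N_G[u]. -/
def SimpleGraph.layeredExt (G : SimpleGraph V) (k : ℕ) : SimpleGraph (V × Fin k) :=
  SimpleGraph.fromRel (fun x y =>
    x.2 = y.2 ∨ x.1 = y.1 ∨ G.Adj x.1 y.1)


lemma layeredExt_adj (G : SimpleGraph V) (k : ℕ) (x y : V × Fin k) :
    (G.layeredExt k).Adj x y ↔ x ≠ y ∧ (x.2 = y.2 ∨ x.1 = y.1 ∨ G.Adj x.1 y.1) := by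
  simp only [layeredExt, fromRel_adj]
  constructor
  · rintro ⟨h, h2 | h2⟩ <;> exact ⟨h, by tauto (config := {})⟩
  · rintro ⟨h, h2⟩; exact ⟨h, Or.inl h2⟩

lemma exists_indepDomSet {W : Type*} [Fintype W] (H : SimpleGraph W) :
    ∃ D : Set W, H.IsIndepSet' D ∧ H.IsDomSet D := by
  classical
  set 𝒜 : Finset (Finset W) := Finset.univ.filter (fun s => H.IsIndepSet' ↑s) with h𝒜
  have hne : 𝒜.Nonempty := ⟨∅, by rw [h𝒜, Finset.mem_filter]; exact ⟨Finset.mem_univ _, by simp [SimpleGraph.IsIndepSet']⟩⟩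
  obtain ⟨m, hm, hmax⟩ := 𝒜.exists_maximal hne
  have hmi : H.IsIndepSet' ↑m := by simpa [h𝒜] using hm
  refine ⟨↑m, hmi, fun v => ?_⟩
  by_cases hv : v ∈ m
  · exact Or.inl hv
  by_contra hcon
  push_neg at hcon
  obtain ⟨hv1, hv2⟩ := hcon
  have hins : H.IsIndepSet' ↑(insert v m) := by
    rw [Finset.coe_insert]
    refine Set.Pairwise.insert hmi fun b hb hbv => ?_
    constructor
    · intro hadj; exact hv2 b hb (H.adj_symm hadj)
    · intro hadj; exact hv2 b hb hadj
  have : insert v m ∈ 𝒜 := by simp only [h𝒜, Finset.mem_filter, Finset.mem_univ, true_and]; exact hins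
  exact hv (hmax this (Finset.subset_insert v m) (Finset.mem_insert_self v m))

lemma indepDomNum_mem {W : Type*} [Fintype W] (H : SimpleGraph W) :
    ∃ D : Set W, H.IsIndepSet' D ∧ H.IsDomSet D ∧ D.ncard = H.indepDomNum := by
  obtain ⟨D, h1, h2⟩ := exists_indepDomSet H
  have : ({n | ∃ D : Set W, H.IsIndepSet' D ∧ H.IsDomSet D ∧ D.ncard = n} : Set ℕ).Nonempty :=
    ⟨D.ncard, D, h1, h2, rfl⟩
  exact Nat.sInf_mem this

lemma indepDomNum_le {W : Type*} (H : SimpleGraph W) (D : Set W)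
    (h1 : H.IsIndepSet' D) (h2 : H.IsDomSet D) : H.indepDomNum ≤ D.ncard :=
  Nat.sInf_le ⟨D, h1, h2, rfl⟩

lemma indepDomNum_pos {W : Type*} [Fintype W] [Nonempty W] (H : SimpleGraph W) :
    0 < H.indepDomNum := by
  obtain ⟨D, h1, h2, h3⟩ := indepDomNum_mem H
  rcases Set.eq_empty_or_nonempty D with rfl | ⟨d, hd⟩
  · obtain ⟨v⟩ := ‹Nonempty W›
    rcases h2 v with h | ⟨u, hu, _⟩ <;> simp_all
  · rw [← h3]
    exact (Set.ncard_pos (Set.toFinite D)).2 ⟨d, hd⟩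

/-- for k ≥ i(G), i(G_k) = i(G). -/
theorem indepDomNum_layeredExt [Fintype V] [Nonempty V] (G : SimpleGraph V) (k : ℕ)
    (hk : G.indepDomNum ≤ k) :
    (G.layeredExt k).indepDomNum = G.indepDomNum := by
  classical
  have hk0 : 0 < k := lt_of_lt_of_le (indepDomNum_pos G) hk
  haveI : Nonempty (Fin k) := ⟨⟨0, hk0⟩⟩
  -- Direction 1 : i(G_k) ≤ i(G)
  obtain ⟨D, hInd, hDom, hcard⟩ := indepDomNum_mem G
  haveI : Fintype D := D.toFinite.fintype
  have hcardD : Fintype.card D = G.indepDomNum := by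
    rw [← hcard, Set.ncard_eq_toFinset_card', Set.toFinset_card]
  obtain ⟨e⟩ : Nonempty (D ↪ Fin k) := by
    apply Function.Embedding.nonempty_of_card_le
    rw [hcardD, Fintype.card_fin]; exact hk
  set g : V → Fin k := fun v => if h : v ∈ D then e ⟨v, h⟩ else Classical.arbitrary _ with hg
  have hgInj : Set.InjOn g D := by
    intro a ha b hb hab
    simp only [hg, dif_pos ha, dif_pos hb] at hab
    exact Subtype.ext_iff.1 (e.injective hab)
  set D' : Set (V × Fin k) := (fun v => (v, g v)) '' D with hD'
  have hD'card : D'.ncard = D.ncard := by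
    apply Set.ncard_image_of_injOn
    intro a _ b _ h
    exact congrArg Prod.fst h
  have hD'ind : (G.layeredExt k).IsIndepSet' D' := by
    rintro x hx y hy hxy hadj
    obtain ⟨a, ha, rfl⟩ := hx
    obtain ⟨b, hb, rfl⟩ := hy
    have hab : a ≠ b := fun h => hxy (by rw [h])
    rw [layeredExt_adj] at hadj
    rcases hadj.2 with h | h | h
    · exact hab (hgInj ha hb h)
    · exact hab h
    · exact hInd ha hb hab h
  have hD'dom : (G.layeredExt k).IsDomSet D' := by
    rintro ⟨v, j⟩
    rcases hDom v with hv | ⟨u, hu, hadj⟩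
    · by_cases h : ((v, j) : V × Fin k) = (v, g v)
      · exact Or.inl (h ▸ ⟨v, hv, rfl⟩)
      · refine Or.inr ⟨(v, g v), ⟨v, hv, rfl⟩, ?_⟩
        rw [layeredExt_adj]
        exact ⟨fun he => h he.symm, Or.inr (Or.inl rfl)⟩
    · refine Or.inr ⟨(u, g u), ⟨u, hu, rfl⟩, ?_⟩
      rw [layeredExt_adj]
      exact ⟨fun he => G.ne_of_adj hadj (congrArg Prod.fst he), Or.inr (Or.inr hadj)⟩
  have dir1 : (G.layeredExt k).indepDomNum ≤ G.indepDomNum := by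
    have := indepDomNum_le _ D' hD'ind hD'dom
    rwa [hD'card, hcard] at this
  -- Direction 2 : i(G) ≤ i(G_k)
  obtain ⟨E, h1, h2, h3⟩ := indepDomNum_mem (G.layeredExt k)
  have hsndInj : Set.InjOn Prod.snd E := by
    intro x hx y hy h
    by_contra hne
    exact h1 hx hy hne ((layeredExt_adj G k x y).2 ⟨hne, Or.inl h⟩)
  have hfstInj : Set.InjOn Prod.fst E := by
    intro x hx y hy h
    by_contra hne
    exact h1 hx hy hne ((layeredExt_adj G k x y).2 ⟨hne, Or.inr (Or.inl h)⟩)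
  set P : Set V := Prod.fst '' E with hP
  have hPcard : P.ncard = E.ncard := Set.ncard_image_of_injOn hfstInj
  have hPind : G.IsIndepSet' P := by
    rintro a ⟨x, hx, rfl⟩ b ⟨y, hy, rfl⟩ hab hadj
    have hne : x ≠ y := fun h => hab (by rw [h])
    exact h1 hx hy hne ((layeredExt_adj G k x y).2 ⟨hne, Or.inr (Or.inr hadj)⟩)
  have hEk : E.ncard ≤ k := by
    have h4 : E.ncard = (Prod.snd '' E).ncard := (Set.ncard_image_of_injOn hsndInj).symm
    rw [h4]
    calc (Prod.snd '' E).ncard ≤ (Set.univ : Set (Fin k)).ncard :=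
          Set.ncard_le_ncard (Set.subset_univ _) Set.finite_univ
      _ = k := by rw [Set.ncard_univ, Nat.card_eq_fintype_card, Fintype.card_fin]
  have dir2 : G.indepDomNum ≤ (G.layeredExt k).indepDomNum := by
    rcases lt_or_eq_of_le hEk with hlt | heq
    · -- some layer is missed
      have hne : Prod.snd '' E ≠ Set.univ := by
        intro h
        rw [← Set.ncard_image_of_injOn hsndInj, h, Set.ncard_univ,
          Nat.card_eq_fintype_card, Fintype.card_fin] at hlt
        exact lt_irrefl _ hlt
      obtain ⟨j, hj⟩ := (Set.ne_univ_iff_exists_notMem _).1 hne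
      have hPdom : G.IsDomSet P := by
        intro v
        rcases h2 (v, j) with hmem | ⟨u, hu, hadj⟩
        · exact absurd ⟨(v, j), hmem, rfl⟩ hj
        · rw [layeredExt_adj] at hadj
          rcases hadj.2 with h | h | h
          · exact absurd ⟨u, hu, h⟩ hj
          · exact Or.inl ⟨u, hu, h⟩
          · exact Or.inr ⟨u.1, ⟨u, hu, rfl⟩, h⟩
      have := indepDomNum_le _ P hPind hPdom
      rwa [hPcard, h3] at this
    · rw [← h3, heq]; exact hk
  exact le_antisymm dir1 dir2
end
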